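/- Let u ∈ A_{2n}(4312) and define g(u) = min{2n+1, u_i : ∃ i < j < k with u_j < u_k < u_i}. For positive integers v_1, v_2, the permutation w = v_1 ↦ (v_2 ↦ u) of {1,...,2n+2} is a 4312-avoiding alternating permutation if and only if 1 ≤ v_1 ≤ v_2 and u_1 + 1 ≤ v_2 ≤ g(u). -/

import Mathlib

/-- `u` is a permutation of `{1,...,m}`, given as the word `u 0, u 1, ..., u (m-1)`. -/
def IsPermOn (m : ℕ) (u : Fin m → ℕ) : Prop :=
  Function.Injective u ∧ ∀ i, u i ∈ Finset.Icc 1 m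

/-- up-down (alternating): u 0 < u 1 > u 2 < u 3 > ... -/
def UpDown (m : ℕ) (u : Fin m → ℕ) : Prop :=
  ∀ i : ℕ, ∀ h : i + 1 < m,
    (i % 2 = 0 → u ⟨i, by omega⟩ < u ⟨i + 1, h⟩) ∧
    (i % 2 = 1 → u ⟨i + 1, h⟩ < u ⟨i, by omega⟩)

/-- down-up: u 0 > u 1 < u 2 > u 3 < ... -/
def DownUp (m : ℕ) (u : Fin m → ℕ) : Prop :=
  ∀ i : ℕ, ∀ h : i + 1 < m,
    (i % 2 = 0 → u ⟨i + 1, h⟩ < u ⟨i, by omega⟩) ∧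
    (i % 2 = 1 → u ⟨i, by omega⟩ < u ⟨i + 1, h⟩)

/-- `u` contains the pattern `σ`. -/
def Contains {m k : ℕ} (u : Fin m → ℕ) (σ : Fin k → ℕ) : Prop :=
  ∃ g : Fin k → Fin m, StrictMono g ∧ ∀ a b : Fin k, u (g a) < u (g b) ↔ σ a < σ b

def Avoids {m k : ℕ} (u : Fin m → ℕ) (σ : Fin k → ℕ) : Prop := ¬ Contains u σ

/-- The set `A_m(σ)` of σ-avoiding up-down alternating permutations of `{1,...,m}`. -/
def AvoidSet (m : ℕ) {k : ℕ} (σ : Fin k → ℕ) : Set (Fin m → ℕ) :=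
  {u | IsPermOn m u ∧ UpDown m u ∧ Avoids u σ}

def p1234 : Fin 4 → ℕ := ![1, 2, 3, 4]
def p1243 : Fin 4 → ℕ := ![1, 2, 4, 3]
def p2143 : Fin 4 → ℕ := ![2, 1, 4, 3]
def p4312 : Fin 4 → ℕ := ![4, 3, 1, 2]
def p3412 : Fin 4 → ℕ := ![3, 4, 1, 2]

/-- `f(u)`: max over 0 and the smaller entries of 21-patterns of `u`. -/
noncomputable def fval {m : ℕ} (u : Fin m → ℕ) : ℕ :=
  sSup ({0} ∪ {x | ∃ i j : Fin m, i < j ∧ u j < u i ∧ x = u j})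

/-- `e(u)`: max over 0 and the smallest entries of 132-patterns of `u`. -/
noncomputable def eval' {m : ℕ} (u : Fin m → ℕ) : ℕ :=
  sSup ({0} ∪ {x | ∃ i j k : Fin m, i < j ∧ j < k ∧ u i < u k ∧ u k < u j ∧ x = u i})

/-- `g(u)`: min over m+1 and the largest entries of 312-patterns of `u`. -/
noncomputable def gval {m : ℕ} (u : Fin m → ℕ) : ℕ :=
  sInf ({m + 1} ∪ {x | ∃ i j k : Fin m, i < j ∧ j < k ∧ u j < u k ∧ u k < u i ∧ x = u i})

/-- `h(u)`: min over m+1 and the larger entries of 12-patterns of `u`. -/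
noncomputable def hval {m : ℕ} (u : Fin m → ℕ) : ℕ :=
  sInf ({m + 1} ∪ {x | ∃ i j : Fin m, i < j ∧ u i < u j ∧ x = u j})

/-- the operation `v ↦ u`: prepend `v`, increasing every entry `≥ v` by 1. -/
def ins {m : ℕ} (v : ℕ) (u : Fin m → ℕ) : Fin (m + 1) → ℕ :=
  Fin.cases v (fun j => if u j < v then u j else u j + 1)

/-- standardization of a word with distinct entries. -/
def stWord {k : ℕ} (r : Fin k → ℕ) : Fin k → ℕ :=
  fun j => (Finset.univ.filter (fun i => r i ≤ r j)).card

/-- value map of `ins`. -/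
def insv (v x : ℕ) : ℕ := if x < v then x else x + 1

lemma insv_lt_iff {v x y : ℕ} : insv v x < insv v y ↔ x < y := by
  unfold insv; split_ifs <;> omega

lemma insv_le (v x : ℕ) : x ≤ insv v x := by unfold insv; split_ifs <;> omega

lemma insv_le' (v x : ℕ) : insv v x ≤ x + 1 := by unfold insv; split_ifs <;> omega

lemma insv_ne (v x : ℕ) : insv v x ≠ v := by unfold insv; split_ifs <;> omega

lemma insv_inj {v x y : ℕ} (h : insv v x = insv v y) : x = y := by
  unfold insv at h; split_ifs at h <;> omega

lemma insv_of_lt {v x : ℕ} (h : x < v) : insv v x = x := by unfold insv; split_ifs <;> omega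

lemma insv_lt_self {v x : ℕ} (h : insv v x < v + 1) : x < v := by
  unfold insv at h; split_ifs at h <;> omega

lemma contains_of {M : ℕ} (w : Fin M → ℕ) (q0 q1 q2 q3 : Fin M)
    (h01 : q0 < q1) (h12 : q1 < q2) (h23 : q2 < q3)
    (a : w q1 < w q0) (b : w q3 < w q1) (c : w q2 < w q3) :
    Contains w p4312 := by
  refine ⟨![q0, q1, q2, q3], ?_, ?_⟩
  · intro i j hij
    fin_cases i <;> fin_cases j <;> simp_all <;> omega
  · intro i j
    fin_cases i <;> fin_cases j <;> simp [p4312] <;> omega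

lemma contains_elim {M : ℕ} (w : Fin M → ℕ) (h : Contains w p4312) :
    ∃ q0 q1 q2 q3 : Fin M, q0 < q1 ∧ q1 < q2 ∧ q2 < q3 ∧
      w q1 < w q0 ∧ w q3 < w q1 ∧ w q2 < w q3 := by
  obtain ⟨g, hg, hval⟩ := h
  exact ⟨g 0, g 1, g 2, g 3, hg (by decide), hg (by decide), hg (by decide),
    (hval 1 0).mpr (by simp [p4312]), (hval 3 1).mpr (by simp [p4312]),
    (hval 2 3).mpr (by simp [p4312])⟩

lemma ins_perm {m : ℕ} {u : Fin m → ℕ} {v : ℕ} (hu : IsPermOn m u) (h1 : 1 ≤ v)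
    (h2 : v ≤ m + 1) : IsPermOn (m + 1) (ins v u) := by
  obtain ⟨hinj, hmem⟩ := hu
  constructor
  · intro a b hab
    induction a using Fin.cases with
    | zero =>
      induction b using Fin.cases with
      | zero => rfl
      | succ j =>
        exact absurd (show insv v (u j) = v from hab.symm) (insv_ne v (u j))
    | succ i =>
      induction b using Fin.cases with
      | zero => exact absurd (show insv v (u i) = v from hab) (insv_ne v (u i))
      | succ j =>
        have : insv v (u i) = insv v (u j) := hab
        exact congrArg Fin.succ (hinj (insv_inj this))
  · intro q
    induction q using Fin.cases with
    | zero =>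
      show v ∈ Finset.Icc 1 (m + 1)
      simp only [Finset.mem_Icc]; omega
    | succ j =>
      show insv v (u j) ∈ Finset.Icc 1 (m + 1)
      have hj := hmem j
      simp only [Finset.mem_Icc] at hj ⊢
      have h3 := insv_le v (u j)
      have h4 := insv_le' v (u j)
      exact ⟨by omega, by omega⟩
lemma insv_chain {a b x : ℕ} (h12 : a ≤ b) (hx : x < b) :
    insv a (insv b x) < insv a b := by
  unfold insv; split_ifs <;> omega

lemma insv_top {a b : ℕ} (h12 : a ≤ b) : insv a b = b + 1 := by
  unfold insv; split_ifs <;> omega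

theorem stmt12 (n : ℕ) (hn : 1 ≤ n) (u : Fin (2 * n) → ℕ) (hu : u ∈ AvoidSet (2 * n) p4312)
    (v1 v2 : ℕ) (hv1 : 1 ≤ v1) (hv2 : 1 ≤ v2) :
    ins v1 (ins v2 u) ∈ AvoidSet (2 * n + 1 + 1) p4312 ↔
      1 ≤ v1 ∧ v1 ≤ v2 ∧ u ⟨0, by omega⟩ + 1 ≤ v2 ∧ v2 ≤ gval u := by
  obtain ⟨huperm, huud, huav⟩ := hu
  have gle : gval u ≤ 2 * n + 1 := Nat.sInf_le (Set.mem_union_left _ rfl)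
  have hz : (0 : ℕ) < 2 * n := by omega
  constructor
  · rintro ⟨wperm, wud, wav⟩
    have hlt01 : (0 : ℕ) + 1 < 2 * n + 1 + 1 := by omega
    have e0 : v1 < insv v1 v2 := (wud 0 hlt01).1 rfl
    have hv12 : v1 ≤ v2 := by unfold insv at e0; split_ifs at e0 <;> omega
    have hlt11 : (1 : ℕ) + 1 < 2 * n + 1 + 1 := by omega
    have e1 : insv v1 (insv v2 (u ⟨0, hz⟩)) < insv v1 v2 := (wud 1 hlt11).2 rfl
    have h5 : insv v2 (u ⟨0, hz⟩) < v2 := insv_lt_iff.mp e1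
    have hu0 : u ⟨0, hz⟩ < v2 := lt_of_le_of_lt (insv_le v2 _) h5
    have hi1 : (1 : ℕ) < 2 * n + 1 + 1 := by omega
    have hw1 : insv v1 v2 ∈ Finset.Icc 1 (2 * n + 1 + 1) := wperm.2 ⟨1, hi1⟩
    have hv2top : v2 ≤ 2 * n + 1 := by
      rw [Finset.mem_Icc] at hw1
      unfold insv at hw1; split_ifs at hw1 <;> omega
    refine ⟨hv1, hv12, Nat.succ_le_of_lt hu0, ?_⟩
    refine le_csInf ⟨2 * n + 1, Set.mem_union_left _ rfl⟩ ?_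
    intro x hx
    simp only [Set.mem_union, Set.mem_singleton_iff, Set.mem_setOf_eq] at hx
    rcases hx with rfl | ⟨i, j, k, hij, hjk, h1, h2, rfl⟩
    · omega
    · by_contra hlt
      push_neg at hlt
      have hui : u i < v2 := hlt
      have hik : (i : ℕ) < j := hij
      have hjk' : (j : ℕ) < k := hjk
      have hkb : (k : ℕ) < 2 * n := k.isLt
      apply wav
      refine contains_of _ ⟨1, by omega⟩ ⟨(i : ℕ) + 2, by omega⟩ ⟨(j : ℕ) + 2, by omega⟩
        ⟨(k : ℕ) + 2, by omega⟩ (Fin.mk_lt_mk.mpr (by omega)) (Fin.mk_lt_mk.mpr (by omega))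
        (Fin.mk_lt_mk.mpr (by omega)) ?_ ?_ ?_
      · show insv v1 (insv v2 (u i)) < insv v1 v2
        exact insv_chain hv12 hui
      · show insv v1 (insv v2 (u k)) < insv v1 (insv v2 (u i))
        exact insv_lt_iff.mpr (insv_lt_iff.mpr h2)
      · show insv v1 (insv v2 (u j)) < insv v1 (insv v2 (u k))
        exact insv_lt_iff.mpr (insv_lt_iff.mpr h1)
  · rintro ⟨-, hv12, hu0, hvg⟩
    have hv2top : v2 ≤ 2 * n + 1 := le_trans hvg gle
    refine ⟨?_, ?_, ?_⟩
    · exact ins_perm (ins_perm huperm hv2 (by omega)) hv1 (by omega)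
    · intro i h
      rcases i with _ | _ | t
      · refine ⟨fun _ => ?_, fun hh => absurd hh (by omega)⟩
        show v1 < insv v1 v2
        rw [insv_top hv12]; omega
      · refine ⟨fun hh => absurd hh (by omega), fun _ => ?_⟩
        show insv v1 (insv v2 (u ⟨0, hz⟩)) < insv v1 v2
        exact insv_chain hv12 (Nat.lt_of_succ_le hu0)
      · have hA : t < 2 * n := by omega
        have hB : t + 1 < 2 * n := by omega
        have hudt := huud t hB
        refine ⟨fun hp => ?_, fun hp => ?_⟩
        · have hp' : t % 2 = 0 := by omega
          show insv v1 (insv v2 (u ⟨t, hA⟩)) < insv v1 (insv v2 (u ⟨t + 1, hB⟩))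
          exact insv_lt_iff.mpr (insv_lt_iff.mpr (hudt.1 hp'))
        · have hp' : t % 2 = 1 := by omega
          show insv v1 (insv v2 (u ⟨t + 1, hB⟩)) < insv v1 (insv v2 (u ⟨t, hA⟩))
          exact insv_lt_iff.mpr (insv_lt_iff.mpr (hudt.2 hp'))
    · intro hcon
      obtain ⟨q0, q1, q2, q3, h01, h12, h23, a, b, c⟩ := contains_elim _ hcon
      have hlt0 : (q0 : ℕ) < (q1 : ℕ) := h01
      have hlt1 : (q1 : ℕ) < (q2 : ℕ) := h12
      have hlt2 : (q2 : ℕ) < (q3 : ℕ) := h23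
      have hq3 : (q3 : ℕ) < 2 * n + 1 + 1 := q3.isLt
      obtain h0 | h0 | h0 : (q0 : ℕ) = 0 ∨ (q0 : ℕ) = 1 ∨ 2 ≤ (q0 : ℕ) := by omega
      · -- q0 has value v1
        have hq0e : q0 = ⟨0, by omega⟩ := Fin.ext h0
        rw [hq0e] at a
        obtain h1' | h1' : (q1 : ℕ) = 1 ∨ 2 ≤ (q1 : ℕ) := by omega
        · -- q1 = 1 : value insv v1 v2 ≥ v1, impossible
          have hq1e : q1 = ⟨1, by omega⟩ := Fin.ext (by simp; omega)
          rw [hq1e] at a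
          have a' : insv v1 v2 < v1 := a
          have := insv_le v1 v2
          omega
        · obtain ⟨t1, hb1, rfl⟩ : ∃ t1, ∃ hb : t1 < 2 * n, q1 = ⟨t1 + 2, Nat.add_lt_add_right hb 2⟩ :=
            ⟨(q1 : ℕ) - 2, by omega, Fin.ext (by simp; omega)⟩
          obtain ⟨t2, hb2, rfl⟩ : ∃ t2, ∃ hb : t2 < 2 * n, q2 = ⟨t2 + 2, Nat.add_lt_add_right hb 2⟩ :=
            ⟨(q2 : ℕ) - 2, by omega, Fin.ext (by simp; omega)⟩
          obtain ⟨t3, hb3, rfl⟩ : ∃ t3, ∃ hb : t3 < 2 * n, q3 = ⟨t3 + 2, Nat.add_lt_add_right hb 2⟩ :=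
            ⟨(q3 : ℕ) - 2, by omega, Fin.ext (by simp; omega)⟩
          simp only [Fin.mk_lt_mk] at h12 h23
          have a' : insv v1 (insv v2 (u ⟨t1, hb1⟩)) < v1 := a
          have b' : insv v1 (insv v2 (u ⟨t3, hb3⟩)) < insv v1 (insv v2 (u ⟨t1, hb1⟩)) := b
          have c' : insv v1 (insv v2 (u ⟨t2, hb2⟩)) < insv v1 (insv v2 (u ⟨t3, hb3⟩)) := c
          have hui : u ⟨t1, hb1⟩ < v2 := by
            have h6 := insv_le v1 (insv v2 (u ⟨t1, hb1⟩))
            have h7 := insv_le v2 (u ⟨t1, hb1⟩)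
            omega
          have hgle : gval u ≤ u ⟨t1, hb1⟩ := by
            refine Nat.sInf_le (Set.mem_union_right _ ?_)
            exact ⟨⟨t1, hb1⟩, ⟨t2, hb2⟩, ⟨t3, hb3⟩, Fin.mk_lt_mk.mpr (by omega),
              Fin.mk_lt_mk.mpr (by omega),
              insv_lt_iff.mp (insv_lt_iff.mp c'),
              insv_lt_iff.mp (insv_lt_iff.mp b'), rfl⟩
          omega
      · -- q0 has value insv v1 v2 = v2 + 1
        have hq0e : q0 = ⟨1, by omega⟩ := Fin.ext (by simp; omega)
        rw [hq0e] at a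
        obtain ⟨t1, hb1, rfl⟩ : ∃ t1, ∃ hb : t1 < 2 * n, q1 = ⟨t1 + 2, Nat.add_lt_add_right hb 2⟩ :=
          ⟨(q1 : ℕ) - 2, by omega, Fin.ext (by simp; omega)⟩
        obtain ⟨t2, hb2, rfl⟩ : ∃ t2, ∃ hb : t2 < 2 * n, q2 = ⟨t2 + 2, Nat.add_lt_add_right hb 2⟩ :=
          ⟨(q2 : ℕ) - 2, by omega, Fin.ext (by simp; omega)⟩
        obtain ⟨t3, hb3, rfl⟩ : ∃ t3, ∃ hb : t3 < 2 * n, q3 = ⟨t3 + 2, Nat.add_lt_add_right hb 2⟩ :=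
          ⟨(q3 : ℕ) - 2, by omega, Fin.ext (by simp; omega)⟩
        simp only [Fin.mk_lt_mk] at h12 h23
        have a' : insv v1 (insv v2 (u ⟨t1, hb1⟩)) < insv v1 v2 := a
        have b' : insv v1 (insv v2 (u ⟨t3, hb3⟩)) < insv v1 (insv v2 (u ⟨t1, hb1⟩)) := b
        have c' : insv v1 (insv v2 (u ⟨t2, hb2⟩)) < insv v1 (insv v2 (u ⟨t3, hb3⟩)) := c
        rw [insv_top hv12] at a'
        have hui : u ⟨t1, hb1⟩ < v2 := by
          have h6 := insv_le v1 (insv v2 (u ⟨t1, hb1⟩))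
          have h7 := insv_le v2 (u ⟨t1, hb1⟩)
          have h8 := insv_le' v2 (u ⟨t1, hb1⟩)
          have h9 : insv v2 (u ⟨t1, hb1⟩) ≠ v2 := insv_ne _ _
          omega
        have hgle : gval u ≤ u ⟨t1, hb1⟩ := by
          refine Nat.sInf_le (Set.mem_union_right _ ?_)
          exact ⟨⟨t1, hb1⟩, ⟨t2, hb2⟩, ⟨t3, hb3⟩, Fin.mk_lt_mk.mpr (by omega),
            Fin.mk_lt_mk.mpr (by omega),
            insv_lt_iff.mp (insv_lt_iff.mp c'),
            insv_lt_iff.mp (insv_lt_iff.mp b'), rfl⟩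
        omega
      · -- all four indices ≥ 2 : pattern already occurs in u
        obtain ⟨t0, hb0, rfl⟩ : ∃ t0, ∃ hb : t0 < 2 * n, q0 = ⟨t0 + 2, Nat.add_lt_add_right hb 2⟩ :=
          ⟨(q0 : ℕ) - 2, by omega, Fin.ext (by simp; omega)⟩
        obtain ⟨t1, hb1, rfl⟩ : ∃ t1, ∃ hb : t1 < 2 * n, q1 = ⟨t1 + 2, Nat.add_lt_add_right hb 2⟩ :=
          ⟨(q1 : ℕ) - 2, by omega, Fin.ext (by simp; omega)⟩
        obtain ⟨t2, hb2, rfl⟩ : ∃ t2, ∃ hb : t2 < 2 * n, q2 = ⟨t2 + 2, Nat.add_lt_add_right hb 2⟩ :=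
          ⟨(q2 : ℕ) - 2, by omega, Fin.ext (by simp; omega)⟩
        obtain ⟨t3, hb3, rfl⟩ : ∃ t3, ∃ hb : t3 < 2 * n, q3 = ⟨t3 + 2, Nat.add_lt_add_right hb 2⟩ :=
          ⟨(q3 : ℕ) - 2, by omega, Fin.ext (by simp; omega)⟩
        simp only [Fin.mk_lt_mk] at h01 h12 h23
        have a' : insv v1 (insv v2 (u ⟨t1, hb1⟩)) < insv v1 (insv v2 (u ⟨t0, hb0⟩)) := a
        have b' : insv v1 (insv v2 (u ⟨t3, hb3⟩)) < insv v1 (insv v2 (u ⟨t1, hb1⟩)) := b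
        have c' : insv v1 (insv v2 (u ⟨t2, hb2⟩)) < insv v1 (insv v2 (u ⟨t3, hb3⟩)) := c
        apply huav
        exact contains_of u ⟨t0, hb0⟩ ⟨t1, hb1⟩ ⟨t2, hb2⟩ ⟨t3, hb3⟩
          (Fin.mk_lt_mk.mpr (by omega)) (Fin.mk_lt_mk.mpr (by omega))
          (Fin.mk_lt_mk.mpr (by omega))
          (insv_lt_iff.mp (insv_lt_iff.mp a'))
          (insv_lt_iff.mp (insv_lt_iff.mp b'))
          (insv_lt_iff.mp (insv_lt_iff.mp c'))
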